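/- Let N ≥ 2 and let p_1, …, p_{N−1} be integers with N dividing ∑_{j=1}^{N−1} j·p_j. For an integer k, there exists an N×N antisymmetric integer matrix M with nonnegative upper entries such that p_j = k·δ_{j,1} + k·δ_{j,N−1} − Δp_j for all 1 ≤ j ≤ N−1 if and only if k ≥ k_n for every 1 ≤ n ≤ N−1. Consequently, the minimal such integer k equals k_min := max{k_n : 1 ≤ n ≤ N−1}. -/
import Mathlib
open Finset
open Finset

lemma sum_Icc_bot (f : ℕ → ℤ) (a b : ℕ) (h : a ≤ b) :
    ∑ i ∈ Icc a b, f i = f a + ∑ i ∈ Icc (a+1) b, f i := by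
  rw [show Icc a b = insert a (Icc (a+1) b) by ext x; simp [Finset.mem_Icc]; omega,
    Finset.sum_insert (by simp)]

lemma swap_sum (f : ℕ → ℤ) (n b : ℕ) :
    ∑ j ∈ Icc 1 n, ∑ i ∈ Icc j b, f i = ∑ i ∈ Icc 1 b, (min i n : ℤ) * f i := by
  have h1 : ∀ j ∈ Icc 1 n, ∑ i ∈ Icc j b, f i
      = ∑ i ∈ Icc 1 b, if j ≤ i then f i else 0 := by
    intro j hj
    simp only [Finset.mem_Icc] at hj
    rw [← Finset.sum_filter]
    apply Finset.sum_congr _ (fun _ _ => rfl)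
    ext i; simp [Finset.mem_Icc, Finset.mem_filter]; omega
  rw [Finset.sum_congr rfl h1, Finset.sum_comm]
  refine Finset.sum_congr rfl fun i hi => ?_
  rw [← Finset.sum_filter,
    show (Icc 1 n).filter (fun j => j ≤ i) = Icc 1 (min i n) by
      ext j; simp [Finset.mem_Icc, Finset.mem_filter]; omega,
    Finset.sum_const, Nat.card_Icc]
  simp [nsmul_eq_mul]

/-- coefficient times indicator -/
lemma sum_coeff_ind (s : Finset ℕ) (c : ℕ → ℤ) (a : ℕ) (k : ℤ) (ha : a ∈ s) :
    ∑ i ∈ s, c i * (if i = a then k else 0) = c a * k := by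
  simp only [mul_ite, mul_zero]
  rw [Finset.sum_ite_eq' s a (fun i => c i * k), if_pos ha]

section Main
variable (N : ℕ) (p : ℕ → ℤ) (k : ℤ)

def dd (i : ℕ) : ℤ := (if i = 1 then k else 0) + (if i = N - 1 then k else 0) - p i

def Sv : ℤ := ∑ j ∈ Icc 1 (N - 1), (j : ℤ) * p j

def mm (j : ℕ) : ℤ := Sv N p / N - k + ∑ i ∈ Icc j (N - 1), dd N p k i

def tt (n : ℕ) : ℤ := ∑ j ∈ Icc 1 n, mm N p k j

def knf (n : ℕ) : ℤ := (n : ℤ) * (Sv N p / N) - ∑ j ∈ Icc 1 n, ((n : ℤ) - j) * p (N - j)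

variable (hN : 2 ≤ N) (hdvd : (N : ℤ) ∣ Sv N p)

include hN hdvd in
lemma min_sum (n : ℕ) (h1 : 1 ≤ n) (h2 : n ≤ N - 1) :
    ∑ i ∈ Icc 1 (N-1), (min i n : ℤ) * dd N p k i
      = k + (n : ℤ) * k - Sv N p + ∑ i ∈ Icc n (N-1), ((i : ℤ) - n) * p i := by
  have e1 : ∑ i ∈ Icc 1 (N-1), (min i n : ℤ) * dd N p k i
      = (∑ i ∈ Icc 1 (N-1), (min i n : ℤ) * (if i = 1 then k else 0))
        + (∑ i ∈ Icc 1 (N-1), (min i n : ℤ) * (if i = N - 1 then k else 0))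
        - ∑ i ∈ Icc 1 (N-1), (min i n : ℤ) * p i := by
    rw [← Finset.sum_add_distrib, ← Finset.sum_sub_distrib]
    refine Finset.sum_congr rfl fun i _ => ?_
    simp only [dd]; ring
  have m1 : (1 : ℕ) ∈ Icc 1 (N-1) := by simp [Finset.mem_Icc]; omega
  have m2 : (N - 1 : ℕ) ∈ Icc 1 (N-1) := by simp [Finset.mem_Icc]; omega
  rw [e1, sum_coeff_ind _ _ _ _ m1, sum_coeff_ind _ _ _ _ m2]
  have c1 : ((1:ℕ):ℤ) ⊓ (n:ℤ) = 1 := by omega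
  have c2 : ((N-1:ℕ):ℤ) ⊓ (n:ℤ) = (n:ℤ) := by omega
  have e3 : ∑ i ∈ Icc 1 (N-1), (min i n : ℤ) * p i
      = Sv N p - ∑ i ∈ Icc n (N-1), ((i : ℤ) - n) * p i := by
    have hsplit : Sv N p = (∑ i ∈ Icc 1 (N-1), (min i n : ℤ) * p i)
        + ∑ i ∈ Icc 1 (N-1), ((i : ℤ) - (min i n : ℤ)) * p i := by
      rw [← Finset.sum_add_distrib]
      refine Finset.sum_congr rfl fun i _ => ?_
      ring
    have hrest : ∑ i ∈ Icc 1 (N-1), ((i : ℤ) - (min i n : ℤ)) * p i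
        = ∑ i ∈ Icc n (N-1), ((i : ℤ) - n) * p i := by
      rw [← Finset.sum_subset (show Icc n (N-1) ⊆ Icc 1 (N-1) by
            intro x; simp [Finset.mem_Icc]; omega)
          (fun x hx hx' => by
            simp only [Finset.mem_Icc] at hx hx'
            have : (x:ℤ) ⊓ (n:ℤ) = (x:ℤ) := by omega
            rw [this]; ring)]
      refine Finset.sum_congr rfl fun i hi => ?_
      simp only [Finset.mem_Icc] at hi
      have : (i:ℤ) ⊓ (n:ℤ) = (n:ℤ) := by omega
      rw [this]
    omega
  rw [c1, c2, e3]; ring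

include hN in
lemma reindex (n : ℕ) (h1 : 1 ≤ n) (h2 : n ≤ N - 1) :
    ∑ j ∈ Icc 1 (N - n), (((N - n : ℕ) : ℤ) - (j:ℤ)) * p (N - j)
      = ∑ i ∈ Icc n (N-1), ((i : ℤ) - n) * p i := by
  refine Finset.sum_nbij' (fun j => N - j) (fun i => N - i) ?_ ?_ ?_ ?_ ?_
  · intro j hj; simp only [Finset.mem_Icc] at *; omega
  · intro i hi; simp only [Finset.mem_Icc] at *; omega
  · intro j hj; simp only [Finset.mem_Icc] at hj; show N - (N - j) = j; omega
  · intro i hi; simp only [Finset.mem_Icc] at hi; show N - (N - i) = i; omega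
  · intro j hj
    simp only [Finset.mem_Icc] at hj
    have e1 : ((N - n : ℕ) : ℤ) = (N:ℤ) - n := by omega
    have e2 : ((N - j : ℕ) : ℤ) = (N:ℤ) - j := by omega
    rw [e1, e2]; ring

include hN hdvd in
lemma tt_eq (n : ℕ) (h1 : 1 ≤ n) (h2 : n ≤ N - 1) :
    tt N p k n = k - knf N p (N - n) := by
  have hcard : (Icc 1 n).card = n := by rw [Nat.card_Icc]; omega
  have e0 : tt N p k n = (n : ℤ) * (Sv N p / N - k)
      + ∑ j ∈ Icc 1 n, ∑ i ∈ Icc j (N-1), dd N p k i := by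
    unfold tt mm
    rw [Finset.sum_add_distrib, Finset.sum_const, hcard, nsmul_eq_mul]
  rw [e0, swap_sum, min_sum N p k hN hdvd n h1 h2]
  unfold knf
  rw [reindex N p hN n h1 h2]
  have hS : (N:ℤ) * (Sv N p / N) = Sv N p := Int.mul_ediv_cancel' hdvd
  have e1 : ((N - n : ℕ) : ℤ) = (N:ℤ) - n := by omega
  rw [e1]
  nlinarith [hS]

include hN in
lemma sumD : ∑ j ∈ Icc 1 N, ∑ i ∈ Icc j (N-1), dd N p k i = (N:ℤ) * k - Sv N p := by
  have hsplit : ∑ j ∈ Icc 1 N, ∑ i ∈ Icc j (N-1), dd N p k i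
      = ∑ j ∈ Icc 1 (N-1), ∑ i ∈ Icc j (N-1), dd N p k i := by
    rw [show Icc 1 N = insert N (Icc 1 (N-1)) by ext x; simp [Finset.mem_Icc]; omega,
      Finset.sum_insert (by simp [Finset.mem_Icc]; omega)]
    rw [show Icc N (N-1) = ∅ by rw [Finset.Icc_eq_empty]; omega]
    simp
  rw [hsplit, swap_sum]
  have e1 : ∑ i ∈ Icc 1 (N-1), ((i:ℤ) ⊓ ((N-1:ℕ):ℤ)) * dd N p k i
      = ∑ i ∈ Icc 1 (N-1), (i:ℤ) * dd N p k i := by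
    refine Finset.sum_congr rfl fun i hi => ?_
    simp only [Finset.mem_Icc] at hi
    have : (i:ℤ) ⊓ ((N-1:ℕ):ℤ) = (i:ℤ) := by omega
    rw [this]
  rw [e1]
  have e2 : ∑ i ∈ Icc 1 (N-1), (i:ℤ) * dd N p k i
      = (∑ i ∈ Icc 1 (N-1), (i:ℤ) * (if i = 1 then k else 0))
        + (∑ i ∈ Icc 1 (N-1), (i:ℤ) * (if i = N - 1 then k else 0))
        - Sv N p := by
    unfold Sv
    rw [← Finset.sum_add_distrib, ← Finset.sum_sub_distrib]
    refine Finset.sum_congr rfl fun i _ => ?_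
    simp only [dd]; ring
  have m1 : (1 : ℕ) ∈ Icc 1 (N-1) := by simp [Finset.mem_Icc]; omega
  have m2 : (N - 1 : ℕ) ∈ Icc 1 (N-1) := by simp [Finset.mem_Icc]; omega
  rw [e2, sum_coeff_ind _ _ _ _ m1, sum_coeff_ind _ _ _ _ m2]
  have : ((N-1:ℕ):ℤ) = (N:ℤ) - 1 := by omega
  rw [this]; push_cast; ring

include hN hdvd in
lemma ttN : tt N p k N = 0 := by
  have hcard : (Icc 1 N).card = N := by rw [Nat.card_Icc]; omega
  have e0 : tt N p k N = (N : ℤ) * (Sv N p / N - k)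
      + ∑ j ∈ Icc 1 N, ∑ i ∈ Icc j (N-1), dd N p k i := by
    unfold tt mm
    rw [Finset.sum_add_distrib, Finset.sum_const, hcard, nsmul_eq_mul]
  have hS : (N:ℤ) * (Sv N p / N) = Sv N p := Int.mul_ediv_cancel' hdvd
  rw [e0, sumD N p k hN]
  nlinarith [hS]

lemma mm_diff (j : ℕ) (h1 : 1 ≤ j) (h2 : j ≤ N - 1) :
    mm N p k j - mm N p k (j+1) = dd N p k j := by
  unfold mm
  rw [sum_Icc_bot _ j (N-1) h2]
  ring

lemma tt_succ (j : ℕ) : tt N p k (j+1) = tt N p k j + mm N p k (j+1) := by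
  unfold tt
  rw [← Finset.sum_Icc_succ_top (by omega : 1 ≤ j + 1)]

lemma antiblock (M : ℕ → ℕ → ℤ) (s : Finset ℕ)
    (h : ∀ j ∈ s, ∀ l ∈ s, M j l = - M l j) :
    ∑ j ∈ s, ∑ l ∈ s, M j l = 0 := by
  have h2 : ∑ j ∈ s, ∑ l ∈ s, M j l = - ∑ j ∈ s, ∑ l ∈ s, M j l := by
    calc ∑ j ∈ s, ∑ l ∈ s, M j l
        = ∑ j ∈ s, ∑ l ∈ s, - M l j :=
          Finset.sum_congr rfl fun j hj => Finset.sum_congr rfl fun l hl => h j hj l hl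
      _ = - ∑ j ∈ s, ∑ l ∈ s, M l j := by
          rw [← Finset.sum_neg_distrib]
          exact Finset.sum_congr rfl fun j _ => by rw [Finset.sum_neg_distrib]
      _ = - ∑ j ∈ s, ∑ l ∈ s, M j l := by rw [Finset.sum_comm]
  linarith

lemma tt_zero : tt N p k 0 = 0 := by unfold tt; simp

end Main



/-- Let `N ≥ 2` and let `p 1, …, p (N-1)` be integers with `N`
dividing `S := ∑_{j=1}^{N-1} j·p j`. For an integer `k`, there exists an `N × N`
antisymmetric integer matrix `M` with nonnegative upper entries such that
`p j = k·δ_{j,1} + k·δ_{j,N-1} - Δp j` for all `1 ≤ j ≤ N-1` if and only if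
`k ≥ k_n` for every `1 ≤ n ≤ N-1`, where
`k_n = (n/N)·S - ∑_{j=1}^n (n-j)·p (N-j)` (an integer by the divisibility
assumption).  Consequently the minimal such `k` equals
`k_min = max { k_n | 1 ≤ n ≤ N-1 }`. -/
theorem stmt_6 (N : ℕ) (hN : 2 ≤ N) (p : ℕ → ℤ)
    (hdvd : (N : ℤ) ∣ ∑ j ∈ Finset.Icc 1 (N - 1), (j : ℤ) * p j) :
    let S : ℤ := ∑ j ∈ Finset.Icc 1 (N - 1), (j : ℤ) * p j
    let kn : ℕ → ℤ := fun n =>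
      (n : ℤ) * (S / N) - ∑ j ∈ Finset.Icc 1 n, ((n : ℤ) - j) * p (N - j)
    let P : ℤ → Prop := fun k => ∃ M : ℕ → ℕ → ℤ,
      (∀ j ∈ Finset.Icc 1 N, ∀ l ∈ Finset.Icc 1 N, M j l = - M l j) ∧
      (∀ j ∈ Finset.Icc 1 N, ∀ l ∈ Finset.Icc 1 N, j < l → 0 ≤ M j l) ∧
      (∀ j ∈ Finset.Icc 1 (N - 1),
        p j = (if j = 1 then k else 0) + (if j = N - 1 then k else 0)
          - ((∑ l ∈ Finset.Icc 1 N, M j l) - (∑ l ∈ Finset.Icc 1 N, M (j + 1) l)))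
    (∀ k : ℤ, P k ↔ ∀ n ∈ Finset.Icc 1 (N - 1), kn n ≤ k) ∧
      IsLeast {k : ℤ | P k}
        (((Finset.Icc 1 (N - 1)).image kn).max'
          ((Finset.nonempty_Icc.mpr (by omega)).image kn)) := by
  intro S kn P
  have hdvd' : (N : ℤ) ∣ Sv N p := hdvd
  have hknf : ∀ n : ℕ, kn n = knf N p n := fun n => rfl
  have key : ∀ k : ℤ, P k ↔ ∀ n ∈ Finset.Icc 1 (N - 1), kn n ≤ k := by
    intro k
    constructor
    · rintro ⟨M, hanti, hpos, hp⟩ n hn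
      simp only [Finset.mem_Icc] at hn
      set r : ℕ → ℤ := fun j => ∑ l ∈ Icc 1 N, M j l with hr
      have hA : ∀ j, 1 ≤ j → j ≤ N - 1 → r j - r (j+1) = dd N p k j := by
        intro j hj1 hj2
        have h := hp j (by simp [Finset.mem_Icc]; omega)
        simp only [dd]
        have hrj : r j = ∑ l ∈ Icc 1 N, M j l := rfl
        have hrj1 : r (j+1) = ∑ l ∈ Icc 1 N, M (j+1) l := rfl
        rw [hrj, hrj1]
        linarith
      have hB : ∀ c j, j + c = N → 1 ≤ j →
          r j = r N + ∑ i ∈ Icc j (N-1), dd N p k i := by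
        intro c
        induction c with
        | zero =>
          intro j hj _
          have hjN : j = N := by omega
          subst hjN
          rw [show Icc j (j-1) = ∅ by rw [Finset.Icc_eq_empty]; omega]
          simp
        | succ c ih =>
          intro j hj hj1
          have h2 : j ≤ N - 1 := by omega
          have hih := ih (j+1) (by omega) (by omega)
          rw [sum_Icc_bot _ j (N-1) h2]
          have hAj := hA j hj1 h2
          linarith
      have hC : ∑ j ∈ Icc 1 N, r j = 0 := antiblock M (Icc 1 N) hanti
      have hD : r N = Sv N p / N - k := by
        have hsum : ∑ j ∈ Icc 1 N, r j
            = ∑ j ∈ Icc 1 N, (r N + ∑ i ∈ Icc j (N-1), dd N p k i) :=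
          Finset.sum_congr rfl fun j hj => by
            simp only [Finset.mem_Icc] at hj
            exact hB (N - j) j (by omega) hj.1
        rw [hC, Finset.sum_add_distrib, Finset.sum_const, Nat.card_Icc,
          sumD N p k hN] at hsum
        have hS : (N:ℤ) * (Sv N p / N) = Sv N p := Int.mul_ediv_cancel' hdvd'
        have hN0 : (0:ℤ) < (N:ℤ) := by exact_mod_cast (by omega : 0 < N)
        have : (N:ℤ) * r N = (N:ℤ) * (Sv N p / N - k) := by
          simp only [nsmul_eq_mul] at hsum
          push_cast at hsum ⊢
          nlinarith [hsum, hS]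
        exact mul_left_cancel₀ (by positivity) this
      have hE : ∀ j, 1 ≤ j → j ≤ N → r j = mm N p k j := by
        intro j h1 h2
        rw [hB (N-j) j (by omega) h1, hD]
        unfold mm; ring
      have hn1 : 1 ≤ N - n := by omega
      have hn2 : N - n ≤ N - 1 := by omega
      have hTT : tt N p k (N - n) = ∑ j ∈ Icc 1 (N - n), r j := by
        unfold tt
        exact Finset.sum_congr rfl fun j hj => by
          simp only [Finset.mem_Icc] at hj
          exact (hE j hj.1 (by omega)).symm
      have hpos' : 0 ≤ ∑ j ∈ Icc 1 (N - n), r j := by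
        have hsub : ∀ x ∈ Icc 1 (N - n), x ∈ Icc 1 N := by
          intro x hx; simp only [Finset.mem_Icc] at *; omega
        have hsplit : ∑ j ∈ Icc 1 (N - n), r j
            = (∑ j ∈ Icc 1 (N - n), ∑ l ∈ Icc 1 (N - n), M j l)
              + ∑ j ∈ Icc 1 (N - n), ∑ l ∈ Icc (N - n + 1) N, M j l := by
          rw [← Finset.sum_add_distrib]
          refine Finset.sum_congr rfl fun j hj => ?_
          have : r j = ∑ l ∈ Icc 1 N, M j l := rfl
          rw [this, show Icc 1 N = Icc 1 (N - n) ∪ Icc (N - n + 1) N by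
              ext x; simp only [Finset.mem_Icc, Finset.mem_union]; omega,
            Finset.sum_union (by
              rw [Finset.disjoint_left]
              intro x hx hx'; simp only [Finset.mem_Icc] at hx hx'; omega)]
        have hzero : ∑ j ∈ Icc 1 (N - n), ∑ l ∈ Icc 1 (N - n), M j l = 0 :=
          antiblock M _ (fun j hj l hl => hanti j (hsub j hj) l (hsub l hl))
        have hge : 0 ≤ ∑ j ∈ Icc 1 (N - n), ∑ l ∈ Icc (N - n + 1) N, M j l := by
          refine Finset.sum_nonneg fun j hj => Finset.sum_nonneg fun l hl => ?_
          simp only [Finset.mem_Icc] at hj hl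
          exact hpos j (by simp only [Finset.mem_Icc]; omega) l
            (by simp only [Finset.mem_Icc]; omega) (by omega)
        rw [hsplit, hzero]; linarith
      have heq := tt_eq N p k hN hdvd' (N - n) hn1 hn2
      rw [show N - (N - n) = n by omega] at heq
      rw [hknf]
      rw [← hTT, heq] at hpos'
      linarith
    · intro hk
      set A : ℕ → ℕ → ℤ :=
        fun j l => if l = j + 1 ∧ 1 ≤ j ∧ j ≤ N - 1 then tt N p k j else 0 with hA
      have RA : ∀ j, 1 ≤ j → j ≤ N → ∑ l ∈ Icc 1 N, A j l = tt N p k j := by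
        intro j hj1 hj2
        have hterm : ∀ l, A j l
            = if l = j + 1 then (if 1 ≤ j ∧ j ≤ N - 1 then tt N p k j else 0) else 0 := by
          intro l
          simp only [hA]
          by_cases h1 : l = j + 1 <;> by_cases h2 : 1 ≤ j ∧ j ≤ N - 1 <;>
            simp [h1, h2]
        rw [Finset.sum_congr rfl fun l _ => hterm l, Finset.sum_ite_eq' (Icc 1 N) (j+1)]
        by_cases hcase : j ≤ N - 1
        · rw [if_pos (by simp only [Finset.mem_Icc]; omega), if_pos ⟨hj1, hcase⟩]
        · have hjN : j = N := by omega
          rw [if_neg (by simp only [Finset.mem_Icc]; omega), hjN,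
            ttN N p k hN hdvd']
      have CA : ∀ j, 1 ≤ j → j ≤ N → ∑ l ∈ Icc 1 N, A l j = tt N p k (j - 1) := by
        intro j hj1 hj2
        have hterm : ∀ l ∈ Icc 1 N, A l j
            = if l = j - 1 then (if 2 ≤ j then tt N p k (j-1) else 0) else 0 := by
          intro l hl
          simp only [Finset.mem_Icc] at hl
          simp only [hA]
          by_cases h1 : l = j - 1 <;> by_cases h2 : 2 ≤ j
          · rw [if_pos (by omega : j = l + 1 ∧ 1 ≤ l ∧ l ≤ N - 1), if_pos h1,
              if_pos h2, h1]
          · rw [if_neg (by omega), if_pos h1, if_neg h2]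
          · rw [if_neg (by omega), if_neg h1]
          · rw [if_neg (by omega), if_neg h1]
        rw [Finset.sum_congr rfl hterm, Finset.sum_ite_eq' (Icc 1 N) (j-1)]
        by_cases hcase : 2 ≤ j
        · rw [if_pos (by simp only [Finset.mem_Icc]; omega), if_pos hcase]
        · have hj1' : j = 1 := by omega
          rw [if_neg (by simp only [Finset.mem_Icc]; omega), hj1', tt_zero]
      have hrow : ∀ j, 1 ≤ j → j ≤ N →
          ∑ l ∈ Icc 1 N, (A j l - A l j) = tt N p k j - tt N p k (j-1) := by
        intro j h1 h2
        rw [Finset.sum_sub_distrib, RA j h1 h2, CA j h1 h2]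
      refine ⟨fun j l => A j l - A l j, fun j _ l _ => by ring, ?_, ?_⟩
      · intro j hj l hl hjl
        simp only [Finset.mem_Icc] at hj hl
        show 0 ≤ A j l - A l j
        have hAlj : A l j = 0 := by
          simp only [hA]; rw [if_neg]; rintro ⟨h, -⟩; omega
        rw [hAlj, sub_zero]
        simp only [hA]
        split_ifs with h
        · obtain ⟨-, hj1, hj2⟩ := h
          have heq := tt_eq N p k hN hdvd' j hj1 hj2
          have hmem : N - j ∈ Finset.Icc 1 (N-1) := by
            simp only [Finset.mem_Icc]; omega
          have hle := hk (N - j) hmem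
          rw [hknf] at hle
          linarith
        · exact le_refl 0
      · intro j hj
        simp only [Finset.mem_Icc] at hj
        beta_reduce
        rw [hrow j hj.1 (by omega), hrow (j+1) (by omega) (by omega)]
        have h1 : tt N p k (j+1) = tt N p k j + mm N p k (j+1) := tt_succ N p k j
        have h2 : tt N p k j = tt N p k (j-1) + mm N p k j := by
          have h := tt_succ N p k (j-1)
          rw [show j - 1 + 1 = j by omega] at h
          exact h
        have h3 : mm N p k j - mm N p k (j+1) = dd N p k j := mm_diff N p k j hj.1 hj.2
        rw [show j + 1 - 1 = j by omega]
        simp only [dd] at h3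
        linarith
  refine ⟨key, ?_, ?_⟩
  · rw [Set.mem_setOf_eq, key]
    intro n hn
    exact Finset.le_max' _ _ (Finset.mem_image_of_mem kn hn)
  · intro k hkP
    rw [Set.mem_setOf_eq, key] at hkP
    refine Finset.max'_le _ _ _ fun y hy => ?_
    obtain ⟨n, hn, rfl⟩ := Finset.mem_image.mp hy
    exact hkP n hn
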